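/- For every real ν ≥ 1/2, lim_{t→0⁺} h_ν(t) = log(2·π^ν/Γ(ν)), i.e., the logarithm of the surface area S_{2ν−1} of the unit (2ν−1)-sphere. -/

import Mathlib

open MeasureTheory Real Filter Set
open scoped ENNReal NNReal Topology

noncomputable section

/-- The modified Bessel function of the first kind `I_ν(t)`. -/
def besselI (ν t : ℝ) : ℝ :=
  ∑' m : ℕ, (t / 2) ^ (2 * (m : ℝ) + ν) / ((m.factorial : ℝ) * Real.Gamma ((m : ℝ) + ν + 1))

/-- The ratio `f_ν(t) = I_ν(t) / I_{ν-1}(t)`. -/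
def besselRatio (ν t : ℝ) : ℝ := besselI ν t / besselI (ν - 1) t

/-- The inverse `f_ν⁻¹ : (0,1) → (0,∞)` of the strictly increasing bijection
`f_ν : (0,∞) → (0,1)`. -/
def besselRatioInv (ν y : ℝ) : ℝ := Function.invFunOn (besselRatio ν) (Set.Ioi 0) y

/-- The function `ξ_ν(t) = -t f_ν(t) + log((2π)^ν I_{ν-1}(t) / t^{ν-1})`. -/
def xiFun (ν t : ℝ) : ℝ :=
  -t * besselRatio ν t + Real.log ((2 * π) ^ ν * besselI (ν - 1) t / t ^ (ν - 1))

/-- The function `h_ν(t) = ξ_ν(f_ν⁻¹(t))`, for `t ∈ (0,1)`. -/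
def hFun (ν t : ℝ) : ℝ := xiFun ν (besselRatioInv ν t)

/-- Surface area of the unit `(n-1)`-sphere in `ℝⁿ`: `S_{n-1} = 2 π^{n/2} / Γ(n/2)`. -/
def surfaceArea (n : ℕ) : ℝ := 2 * π ^ ((n : ℝ) / 2) / Real.Gamma ((n : ℝ) / 2)

/-- `n`-dimensional Euclidean space. -/
abbrev EucSp (n : ℕ) := EuclideanSpace ℝ (Fin n)

/-- The uniform (normalized rotation-invariant) probability distribution on the sphere
`S^{n-1}(R) = {x ∈ ℝⁿ : ‖x‖ = R}`; for `R = 0` it is the point mass at the origin. -/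
def sphereUniform (n : ℕ) (R : ℝ) : Measure (EucSp n) :=
  ((volume : Measure (EucSp n)).toSphere Set.univ)⁻¹ •
    Measure.map (fun x : Metric.sphere (0 : EucSp n) 1 => R • (x : EucSp n))
      (volume : Measure (EucSp n)).toSphere

/-- Kullback-Leibler divergence `KL(μ‖ν)`, with value `∞` unless `μ ≪ ν` and the
log-likelihood ratio is `μ`-integrable. -/
def klDiv {Ω : Type*} [MeasurableSpace Ω] (μ ν : Measure Ω) : ℝ≥0∞ :=
  open scoped Classical in
  if μ ≪ ν ∧ Integrable (llr μ ν) μ then ENNReal.ofReal (∫ x, llr μ ν x ∂μ) else ⊤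

/-- The rate-distortion function `R_n(D;R)` of the uniform distribution on `S^{n-1}(R)`
under squared error distortion: the infimum of the mutual information `I(X̂;X)` over all
joint laws `π` of pairs `(X̂, X)` of `ℝⁿ`-valued random vectors such that `X ∼ μ_R` and
`E[‖X̂ - X‖²] ≤ D`. -/
def rateDistortion (n : ℕ) (D R : ℝ) : ℝ≥0∞ :=
  ⨅ (P : Measure (EucSp n × EucSp n)) (_ : IsProbabilityMeasure P)
    (_ : Measure.map Prod.snd P = sphereUniform n R)
    (_ : ∫⁻ y, ENNReal.ofReal (‖y.1 - y.2‖ ^ (2:ℕ)) ∂P ≤ ENNReal.ofReal D),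
    klDiv P ((Measure.map Prod.fst P).prod (Measure.map Prod.snd P))



/- ### Auxiliary development -/

def gterm (μ : ℝ) (m : ℕ) (t : ℝ) : ℝ :=
  t ^ (2 * m) * (2:ℝ) ^ (-μ - 2 * (m:ℝ)) / ((m.factorial : ℝ) * Real.Gamma ((m:ℝ) + μ + 1))

def gFun (μ t : ℝ) : ℝ := ∑' m : ℕ, gterm μ m t

lemma Gamma_arg_pos {μ : ℝ} (hμ : -1 < μ) (m : ℕ) : 0 < (m:ℝ) + μ + 1 := by
  have : (0:ℝ) ≤ m := Nat.cast_nonneg m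
  linarith

lemma Gamma_arg_gamma_pos {μ : ℝ} (hμ : -1 < μ) (m : ℕ) :
    0 < (m.factorial : ℝ) * Real.Gamma ((m:ℝ) + μ + 1) := by
  have h1 : (0:ℝ) < m.factorial := by exact_mod_cast m.factorial_pos
  exact mul_pos h1 (Real.Gamma_pos_of_pos (Gamma_arg_pos hμ m))

lemma even_pow_nonneg (t : ℝ) (m : ℕ) : 0 ≤ t ^ (2*m) := by
  rw [mul_comm, pow_mul]; positivity

lemma gterm_nonneg {μ : ℝ} (hμ : -1 < μ) (m : ℕ) (t : ℝ) : 0 ≤ gterm μ m t := by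
  apply div_nonneg _ (Gamma_arg_gamma_pos hμ m).le
  have := even_pow_nonneg t m
  positivity

/-- `Γ(μ+1) ≤ 2^m Γ(m+μ+1)` for `μ ≥ -1/2`. -/
lemma Gamma_lb {μ : ℝ} (hμ : -(1/2) ≤ μ) (m : ℕ) :
    Real.Gamma (μ + 1) ≤ 2 ^ m * Real.Gamma ((m:ℝ) + μ + 1) := by
  induction m with
  | zero => simp
  | succ n ih =>
    have harg : (0:ℝ) < (n:ℝ) + μ + 1 := Gamma_arg_pos (by linarith) n
    have h2 : ((n+1:ℕ):ℝ) + μ + 1 = ((n:ℝ) + μ + 1) + 1 := by push_cast; ring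
    rw [h2, Real.Gamma_add_one harg.ne']
    have hg : 0 < Real.Gamma ((n:ℝ) + μ + 1) := Real.Gamma_pos_of_pos harg
    have hhalf : (1/2 : ℝ) ≤ (n:ℝ) + μ + 1 := by
      have : (0:ℝ) ≤ n := Nat.cast_nonneg n
      linarith
    have key := mul_le_mul_of_nonneg_left
      (show (1:ℝ) ≤ 2*((n:ℝ)+μ+1) by linarith)
      (show (0:ℝ) ≤ 2^n * Real.Gamma ((n:ℝ)+μ+1) by positivity)
    calc Real.Gamma (μ+1) ≤ 2^n * Real.Gamma ((n:ℝ)+μ+1) := ih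
      _ ≤ 2^(n+1) * (((n:ℝ)+μ+1) * Real.Gamma ((n:ℝ)+μ+1)) := by
          rw [pow_succ]; nlinarith [key]

lemma two_rpow_split (μ : ℝ) (m : ℕ) :
    (2:ℝ) ^ (-μ - 2 * (m:ℝ)) = 2^(-μ) * ((2:ℝ)⁻¹^m * (2:ℝ)⁻¹^m) := by
  rw [sub_eq_add_neg, Real.rpow_add two_pos]
  congr 1
  rw [show -(2*(m:ℝ)) = (-2) * (m:ℝ) by ring, Real.rpow_mul (by norm_num),
    Real.rpow_natCast]
  rw [show (2:ℝ)^(-2:ℝ) = (2:ℝ)⁻¹ * (2:ℝ)⁻¹ by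
    rw [show (-2:ℝ) = (-1) + (-1) by norm_num, Real.rpow_add two_pos,
      Real.rpow_neg_one]]
  rw [mul_pow]

lemma gterm_le {μ : ℝ} (hμ : -(1/2) ≤ μ) (m : ℕ) {t R : ℝ} (ht : |t| ≤ R) :
    gterm μ m t ≤ ((2:ℝ)^(-μ) / Real.Gamma (μ+1)) * ((R^2/2) ^ m / m.factorial) := by
  have hμ1 : (-1:ℝ) < μ := by linarith
  have hΓ1 := Real.Gamma_pos_of_pos (show (0:ℝ) < μ + 1 by linarith)
  have hR : 0 ≤ R := le_trans (abs_nonneg t) ht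
  have hpow : t ^ (2*m) ≤ (R^2) ^ m := by
    calc t ^ (2*m) ≤ |t ^ (2*m)| := le_abs_self _
      _ = |t| ^ (2*m) := by rw [abs_pow]
      _ ≤ R ^ (2*m) := pow_le_pow_left₀ (abs_nonneg t) ht _
      _ = (R^2)^m := by rw [pow_mul]
  have hΓm := Gamma_lb hμ m
  have hΓmpos := Real.Gamma_pos_of_pos (Gamma_arg_pos hμ1 m)
  have hfac : (0:ℝ) < (m.factorial:ℝ) := by exact_mod_cast m.factorial_pos
  set B := (2:ℝ)^(-μ) with hB
  have hBpos : 0 < B := Real.rpow_pos_of_pos two_pos _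
  set x := (2:ℝ)⁻¹^m with hx
  have hxpos : 0 < x := by positivity
  have hxp : x * 2^m = 1 := by rw [hx, ← mul_pow]; norm_num
  have core : t^(2*m) * (x * Real.Gamma (μ+1)) ≤ (R^2)^m * Real.Gamma ((m:ℝ)+μ+1) := by
    have h1 : x * Real.Gamma (μ+1) ≤ Real.Gamma ((m:ℝ)+μ+1) := by
      calc x * Real.Gamma (μ+1) ≤ x * (2^m * Real.Gamma ((m:ℝ)+μ+1)) :=
            mul_le_mul_of_nonneg_left hΓm hxpos.le
        _ = (x * 2^m) * Real.Gamma ((m:ℝ)+μ+1) := by ring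
        _ = Real.Gamma ((m:ℝ)+μ+1) := by rw [hxp, one_mul]
    exact mul_le_mul hpow h1 (by positivity) (by positivity)
  have hRHS : (B / Real.Gamma (μ+1)) * ((R^2/2) ^ m / m.factorial)
      = B * (R^2)^m / (Real.Gamma (μ+1) * m.factorial * 2^m) := by
    rw [div_pow]
    field_simp
  rw [hRHS, gterm, two_rpow_split, ← hB, ← hx,
    div_le_div_iff₀ (Gamma_arg_gamma_pos hμ1 m) (by positivity)]
  calc t^(2*m) * (B*(x*x)) * (Real.Gamma (μ+1) * m.factorial * 2^m)
      = (B*(m.factorial:ℝ)) * (t^(2*m)*(x*Real.Gamma (μ+1))) * (x*2^m) := by ring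
    _ = (B*(m.factorial:ℝ)) * (t^(2*m)*(x*Real.Gamma (μ+1))) := by rw [hxp, mul_one]
    _ ≤ (B*(m.factorial:ℝ)) * ((R^2)^m * Real.Gamma ((m:ℝ)+μ+1)) :=
        mul_le_mul_of_nonneg_left core (by positivity)
    _ = B*(R^2)^m * ((m.factorial:ℝ) * Real.Gamma ((m:ℝ)+μ+1)) := by ring

lemma summable_bound (C y : ℝ) : Summable (fun m : ℕ => C * (y ^ m / m.factorial)) :=
  (Real.summable_pow_div_factorial y).mul_left C

lemma summable_gterm {μ : ℝ} (hμ : -(1/2) ≤ μ) (t : ℝ) : Summable (fun m => gterm μ m t) := by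
  have hμ1 : (-1:ℝ) < μ := by linarith
  refine Summable.of_nonneg_of_le (fun m => gterm_nonneg hμ1 m t)
    (fun m => gterm_le hμ m (le_refl |t|)) ?_
  exact summable_bound _ _

lemma continuous_gterm (μ : ℝ) (m : ℕ) : Continuous (fun t : ℝ => gterm μ m t) := by
  unfold gterm
  fun_prop

lemma continuous_gFun {μ : ℝ} (hμ : -(1/2) ≤ μ) : Continuous (fun t => gFun μ t) := by
  have hμ1 : (-1:ℝ) < μ := by linarith
  rw [continuous_iff_continuousAt]
  intro x
  set R := |x| + 1 with hR
  have hco : ContinuousOn (fun t => gFun μ t) (Metric.closedBall 0 R) := by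
    apply continuousOn_tsum (fun m => (continuous_gterm μ m).continuousOn)
      (summable_bound ((2:ℝ)^(-μ) / Real.Gamma (μ+1)) (R^2/2))
    intro m t ht
    rw [Real.norm_eq_abs, abs_of_nonneg (gterm_nonneg hμ1 m t)]
    rw [Metric.mem_closedBall, Real.dist_eq, sub_zero] at ht
    exact gterm_le hμ m ht
  exact hco.continuousAt (Metric.closedBall_mem_nhds_of_mem
    (by simp [Real.dist_eq, hR]))

lemma gterm_zero (μ : ℝ) (t : ℝ) : gterm μ 0 t = (2:ℝ)^(-μ) / Real.Gamma (μ+1) := by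
  simp [gterm]

lemma gFun_zero {μ : ℝ} : gFun μ 0 = (2:ℝ)^(-μ) / Real.Gamma (μ+1) := by
  rw [gFun, tsum_eq_single 0, gterm_zero]
  intro m hm
  rw [gterm]
  have : (0:ℝ) ^ (2*m) = 0 := by
    apply zero_pow
    omega
  rw [this, zero_mul, zero_div]

lemma gFun_ge {μ : ℝ} (hμ : -(1/2) ≤ μ) (t : ℝ) :
    (2:ℝ)^(-μ) / Real.Gamma (μ+1) ≤ gFun μ t := by
  have hμ1 : (-1:ℝ) < μ := by linarith
  rw [← gterm_zero μ t]
  exact Summable.le_tsum (summable_gterm hμ t) 0 (fun m _ => gterm_nonneg hμ1 m t)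

lemma gFun_pos {μ : ℝ} (hμ : -(1/2) ≤ μ) (t : ℝ) : 0 < gFun μ t := by
  refine lt_of_lt_of_le ?_ (gFun_ge hμ t)
  have := Real.Gamma_pos_of_pos (show (0:ℝ) < μ + 1 by linarith)
  positivity


lemma besselI_term_eq {μ t : ℝ} (ht : 0 < t) (m : ℕ) :
    (t / 2) ^ (2 * (m : ℝ) + μ) / ((m.factorial : ℝ) * Real.Gamma ((m : ℝ) + μ + 1))
      = t ^ μ * gterm μ m t := by
  rw [gterm, Real.div_rpow ht.le (by norm_num), Real.rpow_add ht,
    show (2*(m:ℝ)) = ((2*m:ℕ):ℝ) by push_cast; ring, Real.rpow_natCast]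
  have hBA : (2:ℝ)^(-μ-((2*m:ℕ):ℝ)) = ((2:ℝ)^(((2*m:ℕ):ℝ)+μ))⁻¹ := by
    rw [← Real.rpow_neg (by norm_num : (0:ℝ) ≤ 2)]
    congr 1
    push_cast
    ring
  rw [hBA]
  ring

lemma besselI_eq {μ t : ℝ} (ht : 0 < t) : besselI μ t = t ^ μ * gFun μ t := by
  rw [besselI, gFun, ← tsum_mul_left]
  exact tsum_congr (besselI_term_eq ht)

lemma besselRatio_eq {ν t : ℝ} (hν : 1/2 ≤ ν) (ht : 0 < t) :
    besselRatio ν t = t * gFun ν t / gFun (ν-1) t := by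
  have hg : gFun (ν-1) t ≠ 0 := (gFun_pos (by linarith) t).ne'
  have h1 : t^(ν-1) ≠ 0 := (Real.rpow_pos_of_pos ht _).ne'
  rw [besselRatio, besselI_eq ht, besselI_eq ht,
    show ν = (ν-1)+1 by ring, Real.rpow_add_one ht.ne']
  field_simp
  ring

lemma gterm_rec_zero {ν : ℝ} (hν : 1/2 ≤ ν) (t : ℝ) :
    gterm (ν-1) 0 t = 2*ν*gterm ν 0 t := by
  have hνpos : (0:ℝ) < ν := by linarith
  rw [gterm, gterm]
  have e1 : ((0:ℕ):ℝ) + (ν-1) + 1 = ν := by push_cast; ring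
  have e2 : ((0:ℕ):ℝ) + ν + 1 = ν + 1 := by push_cast; ring
  rw [e1, e2, Real.Gamma_add_one hνpos.ne']
  have e3 : (2:ℝ) ^ (-(ν-1) - 2*((0:ℕ):ℝ)) = 2 * (2:ℝ)^(-ν - 2*((0:ℕ):ℝ)) := by
    rw [show -(ν-1) - 2*((0:ℕ):ℝ) = 1 + (-ν - 2*((0:ℕ):ℝ)) by push_cast; ring,
      Real.rpow_add two_pos, Real.rpow_one]
  rw [e3]
  have hΓ := Real.Gamma_pos_of_pos hνpos
  field_simp

lemma gterm_rec_succ {ν : ℝ} (hν : 1/2 ≤ ν) (t : ℝ) (n : ℕ) :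
    gterm (ν-1) (n+1) t = 2*ν*gterm ν (n+1) t + t^2 * gterm (ν+1) n t := by
  have harg : (0:ℝ) < (n:ℝ) + ν + 1 := by
    have : (0:ℝ) ≤ n := Nat.cast_nonneg n
    linarith
  have hG := Real.Gamma_pos_of_pos harg
  rw [gterm, gterm, gterm]
  -- Gamma args
  have e1 : ((n+1:ℕ):ℝ) + (ν-1) + 1 = (n:ℝ) + ν + 1 := by push_cast; ring
  have e2 : Real.Gamma (((n+1:ℕ):ℝ) + ν + 1) = ((n:ℝ)+ν+1) * Real.Gamma ((n:ℝ)+ν+1) := by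
    rw [show ((n+1:ℕ):ℝ) + ν + 1 = ((n:ℝ)+ν+1)+1 by push_cast; ring,
      Real.Gamma_add_one harg.ne']
  have e3 : Real.Gamma ((n:ℝ) + (ν+1) + 1) = ((n:ℝ)+ν+1) * Real.Gamma ((n:ℝ)+ν+1) := by
    rw [show (n:ℝ) + (ν+1) + 1 = ((n:ℝ)+ν+1)+1 by push_cast; ring,
      Real.Gamma_add_one harg.ne']
  rw [e1, e2, e3]
  -- powers of 2
  have p1 : (2:ℝ) ^ (-(ν-1) - 2*((n+1:ℕ):ℝ)) = (2:ℝ)^(-ν-2*(n:ℝ)) / 2 := by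
    rw [show -(ν-1) - 2*((n+1:ℕ):ℝ) = (-ν-2*(n:ℝ)) + (-1) by push_cast; ring,
      Real.rpow_add two_pos, Real.rpow_neg_one]
    ring
  have p2 : (2:ℝ) ^ (-ν - 2*((n+1:ℕ):ℝ)) = (2:ℝ)^(-ν-2*(n:ℝ)) / 4 := by
    rw [show -ν - 2*((n+1:ℕ):ℝ) = (-ν-2*(n:ℝ)) + (-2) by push_cast; ring,
      Real.rpow_add two_pos,
      show (2:ℝ)^(-2:ℝ) = 1/4 by
        rw [show (-2:ℝ) = (-1)+(-1) by norm_num, Real.rpow_add two_pos, Real.rpow_neg_one]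
        norm_num]
    ring
  have p3 : (2:ℝ) ^ (-(ν+1) - 2*(n:ℝ)) = (2:ℝ)^(-ν-2*(n:ℝ)) / 2 := by
    rw [show -(ν+1) - 2*(n:ℝ) = (-ν-2*(n:ℝ)) + (-1) by ring,
      Real.rpow_add two_pos, Real.rpow_neg_one]
    ring
  rw [p1, p2, p3]
  -- t powers
  have q1 : t ^ (2*(n+1)) = t^(2*n) * t^2 := by
    rw [show 2*(n+1) = 2*n+2 by ring, pow_add]
  rw [q1]
  -- factorial
  have f1 : ((n+1).factorial : ℝ) = ((n:ℝ)+1) * (n.factorial:ℝ) := by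
    rw [Nat.factorial_succ]; push_cast; ring
  rw [f1]
  have hfac : (0:ℝ) < (n.factorial:ℝ) := by exact_mod_cast n.factorial_pos
  have hn1 : (0:ℝ) < (n:ℝ)+1 := by positivity
  field_simp
  ring


lemma gFun_rec {ν : ℝ} (hν : 1/2 ≤ ν) (t : ℝ) :
    gFun (ν-1) t = 2*ν*gFun ν t + t^2 * gFun (ν+1) t := by
  have hs0 : Summable (fun m => gterm (ν-1) m t) := summable_gterm (by linarith) t
  have hs1 : Summable (fun m => gterm ν m t) := summable_gterm (by linarith) t
  have hs2 : Summable (fun m => gterm (ν+1) m t) := summable_gterm (by linarith) t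
  set k : ℕ → ℝ := fun m => Nat.rec 0 (fun n _ => t^2 * gterm (ν+1) n t) m with hk
  have hk0 : k 0 = 0 := rfl
  have hk1 : ∀ n, k (n+1) = t^2 * gterm (ν+1) n t := fun n => rfl
  have hsk : Summable k := by
    apply (summable_nat_add_iff 1).mp
    simp only [hk1]
    exact hs2.mul_left _
  have hterm : ∀ m, gterm (ν-1) m t = 2*ν*gterm ν m t + k m := by
    rintro (_|n)
    · rw [hk0, add_zero]; exact gterm_rec_zero hν t
    · rw [hk1]; exact gterm_rec_succ hν t n
  calc gFun (ν-1) t = ∑' m, (2*ν*gterm ν m t + k m) := tsum_congr hterm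
    _ = (∑' m, 2*ν*gterm ν m t) + ∑' m, k m := Summable.tsum_add (hs1.mul_left _) hsk
    _ = 2*ν*gFun ν t + ∑' m, k m := by rw [tsum_mul_left]; rfl
    _ = 2*ν*gFun ν t + t^2 * gFun (ν+1) t := by
        congr 1
        rw [Summable.tsum_eq_zero_add hsk, hk0, zero_add]
        simp only [hk1]
        rw [tsum_mul_left]
        rfl

lemma g_succ_term_le {ν : ℝ} (hν : 1/2 ≤ ν) {t : ℝ} (ht : 0 < t) (m : ℕ) :
    t^2 * gterm (ν+1) m t ≤ t * gterm ν m t + t * gterm ν (m+1) t := by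
  have hm : (0:ℝ) ≤ m := Nat.cast_nonneg m
  have harg : (0:ℝ) < (m:ℝ) + ν + 1 := by linarith
  have hG := Real.Gamma_pos_of_pos harg
  have hfac : (0:ℝ) < (m.factorial:ℝ) := by exact_mod_cast m.factorial_pos
  have htm := even_pow_nonneg t m
  have hnn1 : 0 ≤ t * gterm ν m t := mul_nonneg ht.le (gterm_nonneg (by linarith) m t)
  have hnn2 : 0 ≤ t * gterm ν (m+1) t := mul_nonneg ht.le (gterm_nonneg (by linarith) (m+1) t)
  -- two exact representations
  have e3 : Real.Gamma ((m:ℝ) + (ν+1) + 1) = ((m:ℝ)+ν+1) * Real.Gamma ((m:ℝ)+ν+1) := by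
    rw [show (m:ℝ) + (ν+1) + 1 = ((m:ℝ)+ν+1)+1 by ring, Real.Gamma_add_one harg.ne']
  have p3 : (2:ℝ) ^ (-(ν+1) - 2*(m:ℝ)) = (2:ℝ)^(-ν-2*(m:ℝ)) / 2 := by
    rw [show -(ν+1) - 2*(m:ℝ) = (-ν-2*(m:ℝ)) + (-1) by ring,
      Real.rpow_add two_pos, Real.rpow_neg_one]
    ring
  have repA : t^2 * gterm (ν+1) m t = (t / (2*((m:ℝ)+ν+1))) * (t * gterm ν m t) := by
    rw [gterm, gterm, e3, p3]
    field_simp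
  have repB : t^2 * gterm (ν+1) m t = ((2*((m:ℝ)+1)) / t) * (t * gterm ν (m+1) t) := by
    rw [gterm, gterm, e3]
    have e2 : Real.Gamma (((m+1:ℕ):ℝ) + ν + 1) = ((m:ℝ)+ν+1) * Real.Gamma ((m:ℝ)+ν+1) := by
      rw [show ((m+1:ℕ):ℝ) + ν + 1 = ((m:ℝ)+ν+1)+1 by push_cast; ring,
        Real.Gamma_add_one harg.ne']
    have p2 : (2:ℝ) ^ (-ν - 2*((m+1:ℕ):ℝ)) = (2:ℝ)^(-ν-2*(m:ℝ)) / 4 := by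
      rw [show -ν - 2*((m+1:ℕ):ℝ) = (-ν-2*(m:ℝ)) + (-2) by push_cast; ring,
        Real.rpow_add two_pos,
        show (2:ℝ)^(-2:ℝ) = 1/4 by
          rw [show (-2:ℝ) = (-1)+(-1) by norm_num, Real.rpow_add two_pos, Real.rpow_neg_one]
          norm_num]
      ring
    have q1 : t ^ (2*(m+1)) = t^(2*m) * t^2 := by
      rw [show 2*(m+1) = 2*m+2 by ring, pow_add]
    have f1 : ((m+1).factorial : ℝ) = ((m:ℝ)+1) * (m.factorial:ℝ) := by
      rw [Nat.factorial_succ]; push_cast; ring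
    rw [e2, p2, p3, q1, f1]
    field_simp
    ring
  rcases le_or_gt t (2*((m:ℝ)+ν+1)) with hc | hc
  · have : t^2 * gterm (ν+1) m t ≤ 1 * (t * gterm ν m t) := by
      rw [repA]
      apply mul_le_mul_of_nonneg_right _ hnn1
      rw [div_le_one (by linarith)]
      exact hc
    rw [one_mul] at this
    linarith
  · have : t^2 * gterm (ν+1) m t ≤ 1 * (t * gterm ν (m+1) t) := by
      rw [repB]
      apply mul_le_mul_of_nonneg_right _ hnn2
      rw [div_le_one ht]
      linarith
    rw [one_mul] at this
    linarith

lemma g_succ_le {ν : ℝ} (hν : 1/2 ≤ ν) {t : ℝ} (ht : 0 < t) :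
    t^2 * gFun (ν+1) t ≤ 2*t*gFun ν t := by
  have hs1 : Summable (fun m => gterm ν m t) := summable_gterm (by linarith) t
  have hs2 : Summable (fun m => gterm (ν+1) m t) := summable_gterm (by linarith) t
  have hs1' : Summable (fun m => gterm ν (m+1) t) := by
    exact (summable_nat_add_iff 1).mpr hs1
  have hsum2 : ∑' m, gterm ν (m+1) t ≤ gFun ν t := by
    have := Summable.tsum_eq_zero_add hs1
    have h0 := gterm_nonneg (show (-1:ℝ) < ν by linarith) 0 t
    rw [gFun, this]
    linarith
  calc t^2*gFun (ν+1) t = ∑' m, t^2 * gterm (ν+1) m t := by rw [tsum_mul_left]; rfl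
    _ ≤ ∑' m, (t*gterm ν m t + t*gterm ν (m+1) t) := by
        apply Summable.tsum_le_tsum (g_succ_term_le hν ht) (hs2.mul_left _)
        exact (hs1.mul_left _).add (hs1'.mul_left _)
    _ = t*gFun ν t + t*(∑' m, gterm ν (m+1) t) := by
        rw [Summable.tsum_add (hs1.mul_left _) (hs1'.mul_left _), tsum_mul_left, tsum_mul_left]; rfl
    _ ≤ t*gFun ν t + t*gFun ν t := by
        have := mul_le_mul_of_nonneg_left hsum2 ht.le
        linarith
    _ = 2*t*gFun ν t := by ring

lemma besselRatio_ge {ν : ℝ} (hν : 1/2 ≤ ν) {t : ℝ} (ht : 0 < t) :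
    t/(2*ν+2*t) ≤ besselRatio ν t := by
  have hg0 := gFun_pos (show -(1/2:ℝ) ≤ ν-1 by linarith) t
  have hg1 := gFun_pos (show -(1/2:ℝ) ≤ ν by linarith) t
  have h1 : gFun (ν-1) t ≤ (2*ν+2*t) * gFun ν t := by
    rw [gFun_rec hν t]
    have := g_succ_le hν ht (ν := ν)
    nlinarith
  rw [besselRatio_eq hν ht, div_le_div_iff₀ (by linarith) hg0]
  nlinarith [mul_le_mul_of_nonneg_left h1 ht.le]



lemma besselRatio_tendsto_zero {ν : ℝ} (hν : 1/2 ≤ ν) :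
    Tendsto (besselRatio ν) (𝓝[>] (0:ℝ)) (𝓝 0) := by
  have hc : ContinuousAt (fun t => t * gFun ν t / gFun (ν-1) t) 0 := by
    apply ContinuousAt.div
    · exact (continuous_id.mul (continuous_gFun (by linarith))).continuousAt
    · exact (continuous_gFun (by linarith : -(1/2:ℝ) ≤ ν-1)).continuousAt
    · exact (gFun_pos (by linarith) 0).ne'
  have h := hc.tendsto
  rw [zero_mul, zero_div] at h
  refine Tendsto.congr' ?_ (h.mono_left nhdsWithin_le_nhds)
  filter_upwards [self_mem_nhdsWithin] with t ht
  exact (besselRatio_eq hν ht).symm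

lemma xi_tendsto {ν : ℝ} (hν : 1/2 ≤ ν) :
    Tendsto (xiFun ν) (𝓝[>] (0:ℝ)) (𝓝 (Real.log (2 * π ^ ν / Real.Gamma ν))) := by
  have hνpos : (0:ℝ) < ν := by linarith
  have hΓν := Real.Gamma_pos_of_pos hνpos
  set F : ℝ → ℝ := fun t => -t * (t * gFun ν t / gFun (ν-1) t)
      + Real.log ((2*π)^ν * gFun (ν-1) t) with hF
  have hgpos : ∀ t, 0 < gFun (ν-1) t := gFun_pos (by linarith)
  have h2π : (0:ℝ) < (2*π)^ν := Real.rpow_pos_of_pos (by positivity) ν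
  have hcF : ContinuousAt F 0 := by
    apply ContinuousAt.add
    · apply ContinuousAt.mul
      · exact (continuous_neg.continuousAt (x := (0:ℝ)))
      · apply ContinuousAt.div
        · exact (continuous_id.mul (continuous_gFun (by linarith))).continuousAt
        · exact (continuous_gFun (by linarith : -(1/2:ℝ) ≤ ν-1)).continuousAt
        · exact (hgpos 0).ne'
    · apply ContinuousAt.log
      · exact (continuous_const.mul (continuous_gFun (by linarith : -(1/2:ℝ) ≤ ν-1))).continuousAt
      · exact (mul_pos h2π (hgpos 0)).ne'
  have hF0 : F 0 = Real.log (2 * π ^ ν / Real.Gamma ν) := by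
    rw [hF]
    simp only [neg_zero, zero_mul, mul_zero, neg_mul, zero_div]
    rw [gFun_zero]
    have harg : (2*π)^ν * ((2:ℝ)^(-(ν-1)) / Real.Gamma (ν-1+1)) = 2 * π^ν / Real.Gamma ν := by
      rw [show ν - 1 + 1 = ν by ring, Real.mul_rpow (by norm_num) Real.pi_pos.le]
      rw [div_eq_mul_inv, div_eq_mul_inv]
      rw [show (2:ℝ)^ν * π^ν * ((2:ℝ)^(-(ν-1)) * (Real.Gamma ν)⁻¹)
          = ((2:ℝ)^ν * (2:ℝ)^(-(ν-1))) * π^ν * (Real.Gamma ν)⁻¹ by ring]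
      rw [← Real.rpow_add two_pos, show ν + -(ν-1) = 1 by ring, Real.rpow_one]
    rw [harg]
    simp
  have h := hcF.tendsto
  rw [hF0] at h
  refine Tendsto.congr' ?_ (h.mono_left nhdsWithin_le_nhds)
  filter_upwards [self_mem_nhdsWithin] with t ht
  have ht' : (0:ℝ) < t := ht
  have hne : t^(ν-1) ≠ 0 := (Real.rpow_pos_of_pos ht' _).ne'
  have harg : (2*π)^ν * (t^(ν-1) * gFun (ν-1) t) / t^(ν-1) = (2*π)^ν * gFun (ν-1) t := by
    rw [mul_comm (t^(ν-1)) (gFun (ν-1) t), ← mul_assoc, mul_div_assoc, div_self hne, mul_one]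
  rw [hF, xiFun, besselRatio_eq hν ht', besselI_eq ht', harg]

lemma besselRatio_one_pos {ν : ℝ} (hν : 1/2 ≤ ν) : 0 < besselRatio ν 1 := by
  have := besselRatio_ge hν (one_pos)
  have h : (0:ℝ) < 1/(2*ν+2*1) := by positivity
  linarith [this, h]

lemma exists_preimage {ν : ℝ} (hν : 1/2 ≤ ν) {y : ℝ} (hy0 : 0 < y)
    (hy : y < besselRatio ν 1) : ∃ s ∈ Set.Ioi (0:ℝ), besselRatio ν s = y := by
  have hev1 : ∀ᶠ t in 𝓝[>] (0:ℝ), besselRatio ν t < y :=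
    (besselRatio_tendsto_zero hν).eventually (Filter.Tendsto.eventually_lt_const hy0 tendsto_id)
  have hev2 : ∀ᶠ t in 𝓝[>] (0:ℝ), t ∈ Set.Ioo (0:ℝ) 1 :=
    Ioo_mem_nhdsGT_of_mem ⟨le_refl 0, one_pos⟩
  obtain ⟨a, ha1, ha2⟩ := (hev1.and hev2).exists
  obtain ⟨ha0, ha01⟩ := ha2
  have hcont : ContinuousOn (besselRatio ν) (Set.Icc a 1) := by
    have hc : Continuous (fun t => t * gFun ν t / gFun (ν-1) t) := by
      apply Continuous.div
      · exact continuous_id.mul (continuous_gFun (by linarith))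
      · exact continuous_gFun (by linarith : -(1/2:ℝ) ≤ ν-1)
      · exact fun x => (gFun_pos (by linarith) x).ne'
    apply ContinuousOn.congr hc.continuousOn
    intro t htmem
    exact besselRatio_eq hν (lt_of_lt_of_le ha0 htmem.1)
  have hmem : y ∈ Set.Icc (besselRatio ν a) (besselRatio ν 1) := ⟨ha1.le, hy.le⟩
  obtain ⟨s, hs, hfs⟩ := intermediate_value_Icc ha01.le hcont hmem
  exact ⟨s, lt_of_lt_of_le ha0 hs.1, hfs⟩

lemma inv_mem_small {ν : ℝ} (hν : 1/2 ≤ ν) {ε : ℝ} (hε : 0 < ε) :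
    ∀ᶠ y in 𝓝[>] (0:ℝ), besselRatioInv ν y ∈ Set.Ioo 0 ε := by
  have hνpos : (0:ℝ) < ν := by linarith
  set ε' := min ε 1 with hε'
  have hε'pos : 0 < ε' := lt_min hε one_pos
  set δ := min (besselRatio ν 1) (ε'/(2*ν+2*ε')) with hδ
  have hδpos : 0 < δ := lt_min (besselRatio_one_pos hν) (by positivity)
  filter_upwards [Ioo_mem_nhdsGT_of_mem (Set.mem_Ico.mpr ⟨le_refl (0:ℝ), hδpos⟩)] with y hy
  obtain ⟨hy0, hyδ⟩ := hy
  have hy1 : y < besselRatio ν 1 := lt_of_lt_of_le hyδ (min_le_left _ _)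
  obtain ⟨s, hs, hfs⟩ := exists_preimage hν hy0 hy1
  have hmem : besselRatioInv ν y ∈ Set.Ioi (0:ℝ) :=
    Function.invFunOn_mem ⟨s, hs, hfs⟩
  have heq : besselRatio ν (besselRatioInv ν y) = y :=
    Function.invFunOn_eq ⟨s, hs, hfs⟩
  refine ⟨hmem, ?_⟩
  by_contra hcon
  push_neg at hcon
  set u := besselRatioInv ν y with hu
  have hu0 : (0:ℝ) < u := hmem
  have huε : ε' ≤ u := le_trans (min_le_left ε 1) hcon
  have h1 : ε'/(2*ν+2*ε') ≤ u/(2*ν+2*u) := by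
    rw [div_le_div_iff₀ (by positivity) (by positivity)]
    nlinarith
  have h2 : u/(2*ν+2*u) ≤ besselRatio ν u := besselRatio_ge hν hu0
  have h3 : δ ≤ ε'/(2*ν+2*ε') := min_le_right _ _
  rw [heq] at h2
  linarith

lemma inv_tendsto {ν : ℝ} (hν : 1/2 ≤ ν) :
    Tendsto (besselRatioInv ν) (𝓝[>] (0:ℝ)) (𝓝[>] (0:ℝ)) := by
  rw [tendsto_nhdsWithin_iff]
  constructor
  · rw [tendsto_order]
    constructor
    · intro b hb
      filter_upwards [inv_mem_small hν one_pos] with y hy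
      exact lt_trans hb hy.1
    · intro b hb
      filter_upwards [inv_mem_small hν hb] with y hy
      exact hy.2
  · filter_upwards [inv_mem_small hν one_pos] with y hy
    exact hy.1


/-- **Lemma.** For `ν ≥ 1/2`, `lim_{t→0⁺} h_ν(t) = log(2π^ν/Γ(ν)) = log S_{2ν-1}`. -/
theorem hFun_tendsto_at_zero (ν : ℝ) (hν : 1 / 2 ≤ ν) :
    Tendsto (hFun ν) (𝓝[>] (0:ℝ)) (𝓝 (Real.log (2 * π ^ ν / Real.Gamma ν))) :=
  (xi_tendsto hν).comp (inv_tendsto hν)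

end
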